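/- arXiv:1708.03366 — 2 statements merged into one kernel-verified Lean document; each statement's English description precedes it below -/
import Mathlib

section
/- Let N⁺, N⁻ ≥ 1 be integers and α = (α⁺, α⁻) with α⁺ ≤ N⁺ and α⁻ ≤ N⁻. Suppose at least one of the following holds: (i) 2α⁺ ≥ N⁺; (ii) 2α⁻ ≥ N⁻; (iii) α⁺ + α⁻ ≥ N⁻; (iv) α⁺ + α⁻ ≥ N⁺. Then there exist a linearly separable training set (D⁺, D⁻) of feature vectors in ℝ² with card D⁺ = N⁺ and card D⁻ = N⁻, an α-bounded feature attack (E⁺, E⁻) on (D⁺, D⁻), and an affine classifier ĥ minimizing the total 0-1 error err⁺(h, E⁺) + err⁻(h, E⁻) over all affine classifiers h, such that ĥ misclassifies every element of D⁺ or misclassifies every element of D⁻. -/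
open scoped Classical BigOperators

/-- Value of the affine classifier `h = (w, b)` at feature vector `x`. -/
noncomputable def hval {p : ℕ} (h : (Fin p → ℝ) × ℝ) (x : Fin p → ℝ) : ℝ :=
  (∑ i, h.1 i * x i) + h.2

/-- Number of positive feature vectors in `S` misclassified by `h` (with multiplicity). -/
noncomputable def errPos {p : ℕ} (h : (Fin p → ℝ) × ℝ) (S : Multiset (Fin p → ℝ)) : ℕ :=
  Multiset.countP (fun x => hval h x ≤ 0) S

/-- Number of negative feature vectors in `S` misclassified by `h` (with multiplicity). -/
noncomputable def errNeg {p : ℕ} (h : (Fin p → ℝ) × ℝ) (S : Multiset (Fin p → ℝ)) : ℕ :=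
  Multiset.countP (fun x => 0 < hval h x) S

/-- `(Ep, En)` is an `(ap, an)`-bounded feature attack on `(Dp, Dn)`. -/
noncomputable def IsBFA {p : ℕ} (ap an : ℕ) (Dp Dn Ep En : Multiset (Fin p → ℝ)) : Prop :=
  Multiset.card Ep = Multiset.card Dp ∧
  Multiset.card En = Multiset.card Dn ∧
  Multiset.card (Ep - Dp) ≤ ap ∧
  Multiset.card (En - Dn) ≤ an

/-- `(Dp, Dn)` is linearly separable. -/
def LinSep {p : ℕ} (Dp Dn : Multiset (Fin p → ℝ)) : Prop :=
  ∃ h : (Fin p → ℝ) × ℝ, errPos h Dp = 0 ∧ errNeg h Dn = 0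

/-- `h` satisfies the majority constraint on `(Ep, En)`. -/
def Majority {p : ℕ} (h : (Fin p → ℝ) × ℝ) (Ep En : Multiset (Fin p → ℝ)) : Prop :=
  2 * errPos h Ep < Multiset.card Ep ∧ 2 * errNeg h En < Multiset.card En

/-- A point on the x-axis. -/
noncomputable def pt (c : ℝ) : Fin 2 → ℝ := ![c, 0]

lemma hval_pt (h : (Fin 2 → ℝ) × ℝ) (c : ℝ) : hval h (pt c) = h.1 0 * c + h.2 := by
  simp [hval, pt, Fin.sum_univ_two]

lemma countP_repl {α : Type*} (p : α → Prop) [DecidablePred p] (n : ℕ) (a : α) :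
    Multiset.countP p (Multiset.replicate n a) = if p a then n else 0 := by
  induction n with
  | zero => simp
  | succ n ih => rw [Multiset.replicate_succ, Multiset.countP_cons, ih]; split_ifs <;> omega

lemma errPos_repl (h : (Fin 2 → ℝ) × ℝ) (n : ℕ) (x : Fin 2 → ℝ) :
    errPos h (Multiset.replicate n x) = if hval h x ≤ 0 then n else 0 :=
  countP_repl _ n x

lemma errNeg_repl (h : (Fin 2 → ℝ) × ℝ) (n : ℕ) (x : Fin 2 → ℝ) :
    errNeg h (Multiset.replicate n x) = if 0 < hval h x then n else 0 :=
  countP_repl _ n x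

lemma errPos_add (h : (Fin 2 → ℝ) × ℝ) (s t : Multiset (Fin 2 → ℝ)) :
    errPos h (s + t) = errPos h s + errPos h t := Multiset.countP_add _ _ _

lemma errNeg_add (h : (Fin 2 → ℝ) × ℝ) (s t : Multiset (Fin 2 → ℝ)) :
    errNeg h (s + t) = errNeg h s + errNeg h t := Multiset.countP_add _ _ _

lemma bfa_sub (n k : ℕ) (x z : Fin 2 → ℝ) :
    Multiset.card ((Multiset.replicate (n - k) x + Multiset.replicate k z)
      - Multiset.replicate n x) ≤ k := by
  have h1 : (Multiset.replicate (n - k) x + Multiset.replicate k z)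
      - Multiset.replicate n x ≤ Multiset.replicate k z := by
    rw [Multiset.sub_le_iff_le_add, add_comm (Multiset.replicate k z)]
    exact add_le_add ((Multiset.replicate_le_replicate x).2 (Nat.sub_le n k)) le_rfl
  simpa using Multiset.card_le_card h1

lemma linsep_std (Np Nn : ℕ) :
    LinSep (Multiset.replicate Np (pt 1)) (Multiset.replicate Nn (pt (-1))) := by
  refine ⟨(![1, 0], 0), ?_, ?_⟩ <;>
    norm_num [errPos_repl, errNeg_repl, hval_pt]

theorem stmt6 (Np Nn ap an : ℕ) (hNp : 1 ≤ Np) (hNn : 1 ≤ Nn)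
    (hap : ap ≤ Np) (han : an ≤ Nn)
    (hcond : Np ≤ 2 * ap ∨ Nn ≤ 2 * an ∨ Nn ≤ ap + an ∨ Np ≤ ap + an) :
    ∃ (Dp Dn Ep En : Multiset (Fin 2 → ℝ)) (hhat : (Fin 2 → ℝ) × ℝ),
      Multiset.card Dp = Np ∧ Multiset.card Dn = Nn ∧
      LinSep Dp Dn ∧ IsBFA ap an Dp Dn Ep En ∧
      (∀ h : (Fin 2 → ℝ) × ℝ,
        errPos hhat Ep + errNeg hhat En ≤ errPos h Ep + errNeg h En) ∧
      (errPos hhat Dp = Np ∨ errNeg hhat Dn = Nn) := by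
  set Dp : Multiset (Fin 2 → ℝ) := Multiset.replicate Np (pt 1) with hDp
  set Dn : Multiset (Fin 2 → ℝ) := Multiset.replicate Nn (pt (-1)) with hDn
  by_cases hCD : Np ≤ ap + an ∧ Nn ≤ ap + an
  · -- both-move attack, all-negative-like classifier (-x) misclassifies all of Dp
    obtain ⟨hC, hD⟩ := hCD
    refine ⟨Dp, Dn, Multiset.replicate (Np - ap) (pt 1) + Multiset.replicate ap (pt (-1)),
      Multiset.replicate (Nn - an) (pt (-1)) + Multiset.replicate an (pt 1),
      (![(-1 : ℝ), 0], 0), by simp [hDp], by simp [hDn], linsep_std Np Nn, ?_, ?_, ?_⟩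
    · refine ⟨by simp [hDp]; omega, by simp [hDn]; omega, bfa_sub Np ap _ _, bfa_sub Nn an _ _⟩
    · intro h
      simp only [errPos_add, errNeg_add, errPos_repl, errNeg_repl, hval_pt,
        Matrix.cons_val_zero]
      norm_num
      split_ifs <;> first | omega | (exfalso; linarith)
    · left
      norm_num [hDp, errPos_repl, hval_pt]
  · rcases hcond with hA | hB | hC | hD
    · -- case (i): 2ap ≥ Np ; move ap positives to pt (-2)
      refine ⟨Dp, Dn, Multiset.replicate (Np - ap) (pt 1) + Multiset.replicate ap (pt (-2)),
        Dn, ?_, by simp [hDp], by simp [hDn], linsep_std Np Nn,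
        ⟨by simp [hDp]; omega, rfl, bfa_sub Np ap _ _, by simp⟩, ?_, ?_⟩
      · exact if Np - ap ≤ Nn then (![(-1 : ℝ), 0], -(3/2)) else (![(0 : ℝ), 0], 1)
      · intro h
        have key : (3:ℝ) * (h.1 0 * (-1) + h.2)
            = 2 * (h.1 0 * (-2) + h.2) + (h.1 0 * 1 + h.2) := by ring
        by_cases hle : Np - ap ≤ Nn <;>
          simp only [hDn, hle, if_true, if_false, errPos_add, errNeg_add, errPos_repl,
            errNeg_repl, hval_pt, Matrix.cons_val_zero] <;>
          norm_num <;>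
          split_ifs <;> first | omega | (exfalso; linarith)
      · by_cases hle : Np - ap ≤ Nn <;>
          simp only [hDp, hDn, hle, if_true, if_false]
        · left; norm_num [errPos_repl, hval_pt]
        · right; norm_num [errNeg_repl, hval_pt]
    · -- case (ii): 2an ≥ Nn ; move an negatives to pt 2
      refine ⟨Dp, Dn, Dp, Multiset.replicate (Nn - an) (pt (-1)) + Multiset.replicate an (pt 2),
        ?_, by simp [hDp], by simp [hDn], linsep_std Np Nn,
        ⟨rfl, by simp [hDn]; omega, by simp, bfa_sub Nn an _ _⟩, ?_, ?_⟩
      · exact if Nn - an ≤ Np then (![(-1 : ℝ), 0], 3/2) else (![(0 : ℝ), 0], -1)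
      · intro h
        have key : (3:ℝ) * (h.1 0 * 1 + h.2)
            = (h.1 0 * (-1) + h.2) + 2 * (h.1 0 * 2 + h.2) := by ring
        by_cases hle : Nn - an ≤ Np <;>
          simp only [hDp, hle, if_true, if_false, errPos_add, errNeg_add, errPos_repl,
            errNeg_repl, hval_pt, Matrix.cons_val_zero] <;>
          norm_num <;>
          split_ifs <;> first | omega | (exfalso; linarith)
      · by_cases hle : Nn - an ≤ Np <;>
          simp only [hDp, hDn, hle, if_true, if_false]
        · right; norm_num [errNeg_repl, hval_pt]
        · left; norm_num [errPos_repl, hval_pt]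
    · -- case (iii): Nn ≤ ap + an, and (from ¬hCD) ap + an < Np ; all-positive classifier
      have hD' : ¬ Np ≤ ap + an := fun h => hCD ⟨h, hC⟩
      refine ⟨Dp, Dn, Multiset.replicate (Np - ap) (pt 1) + Multiset.replicate ap (pt (-1)),
        Multiset.replicate (Nn - an) (pt (-1)) + Multiset.replicate an (pt 1),
        (![(0 : ℝ), 0], 1), by simp [hDp], by simp [hDn], linsep_std Np Nn,
        ⟨by simp [hDp]; omega, by simp [hDn]; omega, bfa_sub Np ap _ _, bfa_sub Nn an _ _⟩,
        ?_, ?_⟩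
      · intro h
        simp only [errPos_add, errNeg_add, errPos_repl, errNeg_repl, hval_pt,
          Matrix.cons_val_zero]
        norm_num
        split_ifs <;> first | omega | (exfalso; linarith)
      · right; norm_num [hDn, errNeg_repl, hval_pt]
    · -- case (iv): Np ≤ ap + an, and (from ¬hCD) ap + an < Nn ; all-negative classifier
      have hC' : ¬ Nn ≤ ap + an := fun h => hCD ⟨hD, h⟩
      refine ⟨Dp, Dn, Multiset.replicate (Np - ap) (pt 1) + Multiset.replicate ap (pt (-1)),
        Multiset.replicate (Nn - an) (pt (-1)) + Multiset.replicate an (pt 1),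
        (![(0 : ℝ), 0], -1), by simp [hDp], by simp [hDn], linsep_std Np Nn,
        ⟨by simp [hDp]; omega, by simp [hDn]; omega, bfa_sub Np ap _ _, bfa_sub Nn an _ _⟩,
        ?_, ?_⟩
      · intro h
        simp only [errPos_add, errNeg_add, errPos_repl, errNeg_repl, hval_pt,
          Matrix.cons_val_zero]
        norm_num
        split_ifs <;> first | omega | (exfalso; linarith)
      · left; norm_num [hDp, errPos_repl, hval_pt]
end

section
/- Let (D⁺, D⁻) be linearly separable training data in ℝ^p with N⁺ = card D⁺ and N⁻ = card D⁻, let α = (α⁺, α⁻) satisfy 2α⁺ < N⁺ and 2α⁻ < N⁻, let (E⁺, E⁻) be an α-bounded feature attack on (D⁺, D⁻), and let ĥ be an affine classifier that satisfies the majority constraint on (E⁺, E⁻) and minimizes the total 0-1 error err⁺(h, E⁺) + err⁻(h, E⁻) among all affine classifiers h satisfying the majority constraint on (E⁺, E⁻). Then 2·err⁺(ĥ, D⁺) ≤ min(2(2α⁺ + α⁻), 2α⁺ + N⁺ − 1) and 2·err⁻(ĥ, D⁻) ≤ min(2(α⁺ + 2α⁻), 2α⁻ + N⁻ − 1); equivalently,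 the 0-1 risk of ĥ on D⁺ is at most min(2α⁺ + α⁻, α⁺ + (N⁺ − 1)/2)/N⁺ and on D⁻ is at most min(α⁺ + 2α⁻, α⁻ + (N⁻ − 1)/2)/N⁻. -/
open scoped Classical BigOperators

lemma inter_add_sub' {α : Type*} [DecidableEq α] (E D : Multiset α) :
    E ∩ D + (E - D) = E := by
  ext a
  simp [Multiset.count_inter, Multiset.count_sub]
  omega

lemma countP_le_countP_add {α : Type*} [DecidableEq α] (q : α → Prop) [DecidablePred q]
    (E D : Multiset α) :
    Multiset.countP q E ≤ Multiset.countP q D + Multiset.card (E - D) := by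
  calc Multiset.countP q E
      = Multiset.countP q (E ∩ D) + Multiset.countP q (E - D) := by
        rw [← Multiset.countP_add, inter_add_sub']
    _ ≤ Multiset.countP q D + Multiset.card (E - D) :=
        Nat.add_le_add (Multiset.countP_le_of_le _ Multiset.inter_le_right)
          (Multiset.countP_le_card _ _)

lemma card_sub_eq' {α : Type*} [DecidableEq α] (E D : Multiset α)
    (h : Multiset.card E = Multiset.card D) :
    Multiset.card (D - E) = Multiset.card (E - D) := by
  have h1 := congrArg Multiset.card (inter_add_sub' E D)
  have h2 := congrArg Multiset.card (inter_add_sub' D E)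
  rw [Multiset.card_add] at h1 h2
  rw [Multiset.inter_comm] at h2
  omega

theorem stmt11 {p : ℕ} (hp : 1 ≤ p)
    (Dp Dn Ep En : Multiset (Fin p → ℝ)) (ap an : ℕ)
    (hsep : LinSep Dp Dn)
    (hap : 2 * ap < Multiset.card Dp) (han : 2 * an < Multiset.card Dn)
    (hBFA : IsBFA ap an Dp Dn Ep En)
    (hhat : (Fin p → ℝ) × ℝ)
    (hmaj : Majority hhat Ep En)
    (hopt : ∀ h : (Fin p → ℝ) × ℝ, Majority h Ep En →
      errPos hhat Ep + errNeg hhat En ≤ errPos h Ep + errNeg h En) :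
    2 * errPos hhat Dp ≤ min (2 * (2 * ap + an)) (2 * ap + Multiset.card Dp - 1) ∧
    2 * errNeg hhat Dn ≤ min (2 * (ap + 2 * an)) (2 * an + Multiset.card Dn - 1) := by
  obtain ⟨hstar, hsp, hsn⟩ := hsep
  obtain ⟨hcp, hcn, hEp, hEn⟩ := hBFA
  -- card of symmetric differences
  have hDpEp : Multiset.card (Dp - Ep) ≤ ap := by
    rw [card_sub_eq' Ep Dp hcp]; exact hEp
  have hDnEn : Multiset.card (Dn - En) ≤ an := by
    rw [card_sub_eq' En Dn hcn]; exact hEn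
  -- transfer errors between D and E
  have tp : ∀ h : (Fin p → ℝ) × ℝ, errPos h Dp ≤ errPos h Ep + ap := fun h =>
    le_trans (countP_le_countP_add _ Dp Ep) (Nat.add_le_add_left hDpEp _)
  have tp' : ∀ h : (Fin p → ℝ) × ℝ, errPos h Ep ≤ errPos h Dp + ap := fun h =>
    le_trans (countP_le_countP_add _ Ep Dp) (Nat.add_le_add_left hEp _)
  have tn : ∀ h : (Fin p → ℝ) × ℝ, errNeg h Dn ≤ errNeg h En + an := fun h =>
    le_trans (countP_le_countP_add _ Dn En) (Nat.add_le_add_left hDnEn _)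
  have tn' : ∀ h : (Fin p → ℝ) × ℝ, errNeg h En ≤ errNeg h Dn + an := fun h =>
    le_trans (countP_le_countP_add _ En Dn) (Nat.add_le_add_left hEn _)
  -- the separator satisfies the majority constraint on (Ep, En)
  have hsEp : errPos hstar Ep ≤ ap := by have := tp' hstar; omega
  have hsEn : errNeg hstar En ≤ an := by have := tn' hstar; omega
  have hmajs : Majority hstar Ep En := by
    constructor
    · rw [hcp]; omega
    · rw [hcn]; omega
  have hkey : errPos hhat Ep + errNeg hhat En ≤ ap + an :=
    le_trans (hopt hstar hmajs) (Nat.add_le_add hsEp hsEn)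
  obtain ⟨hm1, hm2⟩ := hmaj
  rw [hcp] at hm1
  rw [hcn] at hm2
  have h1 := tp hhat
  have h2 := tn hhat
  constructor
  · exact le_min (by omega) (by omega)
  · exact le_min (by omega) (by omega)
end
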